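/- Let h ∈ ℝ[x] be a univariate polynomial of even degree d = 2d₀ that is nonnegative on [a,b] with a < b. Then there exist polynomials p of degree at most d₀ and q of degree at most d₀-1 such that h = p² + (x-a)(b-x)·q². -/

import Mathlib

open Polynomial Real


lemma expand2 (Q : ℝ[X]) (hQ : Q.natDegree ≤ 2) :
    Q = C (Q.coeff 2) * X ^ 2 + C (Q.coeff 1) * X + C (Q.coeff 0) := by
  ext n
  rcases n with _ | _ | _ | n
  · simp
  · simp [coeff_C]
  · simp [coeff_C]
  · rw [coeff_eq_zero_of_natDegree_lt (by omega)]
    simp [coeff_C, coeff_X]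

lemma odd_root (g : ℝ[X]) (ho : Odd g.natDegree) : ∃ r, g.eval r = 0 := by
  have key : ∀ g : ℝ[X], Odd g.natDegree → 0 < g.leadingCoeff → ∃ r, g.eval r = 0 := by
    intro g ho hlc
    have hg0 : g ≠ 0 := leadingCoeff_ne_zero.mp hlc.ne'
    have hnd : 0 < g.natDegree := ho.pos
    have hdeg : 0 < g.degree := natDegree_pos_iff_degree_pos.mp hnd
    obtain ⟨x₁, hx₁⟩ := ((g.tendsto_atTop_of_leadingCoeff_nonneg hdeg hlc.le).eventually_gt_atTop 0).exists
    set g2 : ℝ[X] := g.comp (-X) with hg2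
    have hnd2 : g2.natDegree = g.natDegree := by
      rw [hg2, natDegree_comp, natDegree_neg, natDegree_X, mul_one]
    have hdeg2 : 0 < g2.degree := natDegree_pos_iff_degree_pos.mp (by omega)
    have hlc2 : g2.leadingCoeff ≤ 0 := by
      rw [hg2, leadingCoeff_comp (by simp), leadingCoeff_neg, leadingCoeff_X]
      rw [ho.neg_one_pow]
      nlinarith
    obtain ⟨x₂, hx₂⟩ := ((g2.tendsto_atBot_of_leadingCoeff_nonpos hdeg2 hlc2).eventually_lt_atBot 0).exists
    rw [hg2, eval_comp, eval_neg, eval_X] at hx₂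
    have : (0:ℝ) ∈ Set.Icc (g.eval (-x₂)) (g.eval x₁) := ⟨hx₂.le, hx₁.le⟩
    obtain ⟨r, hr⟩ := intermediate_value_univ (-x₂) x₁ g.continuous this
    exact ⟨r, hr⟩
  rcases lt_trichotomy g.leadingCoeff 0 with h | h | h
  · obtain ⟨r, hr⟩ := key (-g) (by rwa [natDegree_neg]) (by rw [leadingCoeff_neg]; linarith)
    exact ⟨r, by simpa using hr⟩
  · exact ⟨0, by simp [leadingCoeff_eq_zero.mp h]⟩
  · exact key g ho h

lemma pos_quad (f : ℝ[X]) (hm : f.Monic) (hd : f.natDegree = 2) (hnr : ∀ x, f.eval x ≠ 0) :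
    ∀ x, 0 < f.eval x := by
  have hdeg : 0 < f.degree := natDegree_pos_iff_degree_pos.mp (by omega)
  obtain ⟨y, hy⟩ := ((f.tendsto_atTop_of_leadingCoeff_nonneg hdeg (by rw [hm.leadingCoeff]; norm_num)).eventually_gt_atTop 0).exists
  intro x
  rcases (hnr x).lt_or_gt with hx | hx
  · exfalso
    have : (0:ℝ) ∈ Set.Icc (f.eval x) (f.eval y) := ⟨hx.le, hy.le⟩
    obtain ⟨r, hr⟩ := intermediate_value_univ x y f.continuous this
    exact hnr r hr
  · exact hx

lemma div_nonneg_on {a b : ℝ} (hab : a < b) (Q g : ℝ[X]) (hQ0 : Q ≠ 0)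
    (hQ : ∀ x ∈ Set.Icc a b, 0 ≤ Q.eval x)
    (hQg : ∀ x ∈ Set.Icc a b, 0 ≤ (Q * g).eval x) :
    ∀ x ∈ Set.Icc a b, 0 ≤ g.eval x := by
  intro x hx
  by_contra hgx
  push_neg at hgx
  have hU : IsOpen {y : ℝ | g.eval y < 0} := isOpen_lt g.continuous continuous_const
  obtain ⟨ε, hε, hball⟩ := Metric.isOpen_iff.mp hU x hgx
  set u := max a (x - ε / 2) with hu
  set v := min b (x + ε / 2) with hv
  have huv : u < v := by
    rcases hx with ⟨h1, h2⟩
    apply max_lt <;> apply lt_min <;> linarith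
  have hsub : Set.Icc u v ⊆ Set.Icc a b ∩ {y | g.eval y < 0} := by
    intro y ⟨hy1, hy2⟩
    have h1 : a ≤ u := le_max_left _ _
    have h2 : v ≤ b := min_le_left _ _
    refine ⟨⟨le_trans h1 hy1, le_trans hy2 h2⟩, ?_⟩
    apply hball
    rw [Metric.mem_ball, Real.dist_eq, abs_lt]
    have h3 : x - ε / 2 ≤ u := le_max_right _ _
    have h4 : v ≤ x + ε / 2 := min_le_right _ _
    constructor <;> nlinarith [le_trans h3 hy1, le_trans hy2 h4]
  have hfin := Polynomial.finite_setOf_isRoot hQ0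
  have hinf : (Set.Icc u v).Infinite := Set.infinite_coe_iff.mp (Set.Icc.infinite huv)
  obtain ⟨y, hy, hyr⟩ : ∃ y ∈ Set.Icc u v, ¬ Q.IsRoot y := by
    by_contra hcon
    push_neg at hcon
    exact hinf (hfin.subset hcon)
  obtain ⟨hyab, hyg⟩ := hsub hy
  have hyg' : g.eval y < 0 := hyg
  have hQy : 0 < Q.eval y := lt_of_le_of_ne (hQ y hyab) (Ne.symm hyr)
  have := hQg y hyab
  rw [eval_mul] at this
  nlinarith

lemma interior_root_sq {a b : ℝ} (h : ℝ[X]) (hne : h ≠ 0)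
    (hpos : ∀ x ∈ Set.Icc a b, 0 ≤ h.eval x) (r : ℝ) (har : a < r) (hrb : r < b)
    (hr : h.eval r = 0) : (X - C r) ^ 2 ∣ h := by
  obtain ⟨g, hg, hnd⟩ := h.exists_eq_pow_rootMultiplicity_mul_and_not_dvd hne r
  have hk : 0 < h.rootMultiplicity r := (rootMultiplicity_pos hne).mpr hr
  rcases Nat.lt_or_ge (h.rootMultiplicity r) 2 with hk2 | hk2
  · exfalso
    have hk1 : h.rootMultiplicity r = 1 := by omega
    rw [hk1, pow_one] at hg
    have hgr : g.eval r ≠ 0 := fun hc => hnd (dvd_iff_isRoot.mpr hc)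
    rcases hgr.lt_or_gt with hgr' | hgr'
    · -- g(r) < 0 : take y ∈ (r, b), h(y) = (y - r) g(y) < 0
      have : IsOpen {y : ℝ | g.eval y < 0} := isOpen_lt g.continuous continuous_const
      obtain ⟨ε, hε, hball⟩ := Metric.isOpen_iff.mp this r hgr'
      set y := min ((r + b) / 2) (r + ε / 2) with hy
      have hy1 : r < y := by apply lt_min <;> linarith
      have hy2 : y ≤ (r + b)/2 := min_le_left _ _
      have hy3 : y ≤ r + ε / 2 := min_le_right _ _
      have hygneg : g.eval y < 0 := hball (by rw [Metric.mem_ball, Real.dist_eq, abs_lt]; constructor <;> linarith)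
      have hyab : y ∈ Set.Icc a b := ⟨by linarith, by linarith⟩
      have := hpos y hyab
      rw [hg, eval_mul, eval_sub, eval_X, eval_C] at this
      nlinarith
    · have : IsOpen {y : ℝ | 0 < g.eval y} := isOpen_lt continuous_const g.continuous
      obtain ⟨ε, hε, hball⟩ := Metric.isOpen_iff.mp this r hgr'
      set y := max ((a + r) / 2) (r - ε / 2) with hy
      have hy1 : y < r := by apply max_lt <;> linarith
      have hy2 : (a + r)/2 ≤ y := le_max_left _ _
      have hy3 : r - ε / 2 ≤ y := le_max_right _ _
      have hygpos : 0 < g.eval y := hball (by rw [Metric.mem_ball, Real.dist_eq, abs_lt]; constructor <;> linarith)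
      have hyab : y ∈ Set.Icc a b := ⟨by linarith, by linarith⟩
      have := hpos y hyab
      rw [hg, eval_mul, eval_sub, eval_X, eval_C] at this
      nlinarith
  · calc (X - C r) ^ 2 ∣ (X - C r) ^ (h.rootMultiplicity r) := pow_dvd_pow _ hk2
    _ ∣ h := h.pow_rootMultiplicity_dvd r

lemma quad_rep {a b : ℝ} (hab : a < b) (c₂ c₁ c₀ : ℝ)
    (ha : 0 ≤ c₂ * a ^ 2 + c₁ * a + c₀) (hb : 0 ≤ c₂ * b ^ 2 + c₁ * b + c₀)
    (key : c₂ * (b - a) ^ 2 ≤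
      (Real.sqrt (c₂ * a ^ 2 + c₁ * a + c₀) + Real.sqrt (c₂ * b ^ 2 + c₁ * b + c₀)) ^ 2) :
    ∃ p q : ℝ[X], p.degree ≤ 1 ∧ q.degree < 1 ∧
      C c₂ * X ^ 2 + C c₁ * X + C c₀ = p ^ 2 + (X - C a) * (C b - X) * q ^ 2 := by
  have hD : b - a ≠ 0 := by linarith
  set u := Real.sqrt (c₂ * a ^ 2 + c₁ * a + c₀) with hu_def
  set v := Real.sqrt (c₂ * b ^ 2 + c₁ * b + c₀) with hv_def
  have hu : u ^ 2 = c₂ * a ^ 2 + c₁ * a + c₀ := Real.sq_sqrt ha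
  have hv : v ^ 2 = c₂ * b ^ 2 + c₁ * b + c₀ := Real.sq_sqrt hb
  obtain ⟨α, hα⟩ : ∃ α : ℝ, α * (b - a) = -(u + v) := ⟨-(u + v) / (b - a), by field_simp⟩
  set β := u - α * a with hβ_def
  set κ := α ^ 2 - c₂ with hκ_def
  have hκ : 0 ≤ κ := by
    have h1 : κ * (b - a) ^ 2 = (u + v) ^ 2 - c₂ * (b - a) ^ 2 := by
      rw [hκ_def]; linear_combination (α * (b - a) - (u + v)) * hα
    have hD2 : 0 < (b - a) ^ 2 := by positivity
    nlinarith [h1, key, hD2]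
  have s1 : c₁ * (b - a) ^ 2 = (2 * α * β + κ * (a + b)) * (b - a) ^ 2 := by
    rw [hβ_def, hκ_def]
    linear_combination (-(b - a) * (α * (b - a) + u + v - 2 * v)) * hα - (b - a) * hv + (b - a) * hu
  have s0 : c₀ * (b - a) ^ 2 = (β ^ 2 - κ * (a * b)) * (b - a) ^ 2 := by
    rw [hβ_def, hκ_def]
    linear_combination (-(b - a) ^ 2 - a * (b - a)) * hu + a * (b - a) * hv +
      (-(a * (b - a)) * (2 * v - (α * (b - a) + u + v))) * hα
  have s1' : c₁ = 2 * α * β + κ * (a + b) := mul_right_cancel₀ (pow_ne_zero 2 hD) s1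
  have s0' : c₀ = β ^ 2 - κ * (a * b) := mul_right_cancel₀ (pow_ne_zero 2 hD) s0
  have s2' : c₂ = α ^ 2 - κ := by rw [hκ_def]; ring
  refine ⟨C α * X + C β, C (Real.sqrt κ), degree_linear_le, ?_, ?_⟩
  · exact lt_of_le_of_lt degree_C_le (by norm_num)
  · have hCκ : (C (Real.sqrt κ) : ℝ[X]) ^ 2 = C κ := by
      rw [← map_pow, Real.sq_sqrt hκ]
    rw [hCκ, s2', s1', s0']
    simp only [map_sub, map_add, map_mul, map_pow, map_ofNat]
    ring

lemma w_deg (a b : ℝ) : ((X - C a) * (C b - X) : ℝ[X]).degree = 2 := by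
  rw [degree_mul, degree_X_sub_C, show (C b - X : ℝ[X]) = -(X - C b) by ring,
    degree_neg, degree_X_sub_C]
  rfl

lemma rep_mul {a b : ℝ} {m n : ℕ} {h₁ h₂ : ℝ[X]}
    (H₁ : ∃ p q : ℝ[X], p.degree ≤ m ∧ q.degree < m ∧
      h₁ = p ^ 2 + (X - C a) * (C b - X) * q ^ 2)
    (H₂ : ∃ p q : ℝ[X], p.degree ≤ n ∧ q.degree < n ∧
      h₂ = p ^ 2 + (X - C a) * (C b - X) * q ^ 2) :
    ∃ p q : ℝ[X], p.degree ≤ (m + n : ℕ) ∧ q.degree < (m + n : ℕ) ∧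
      h₁ * h₂ = p ^ 2 + (X - C a) * (C b - X) * q ^ 2 := by
  obtain ⟨p₁, q₁, hp₁, hq₁, e₁⟩ := H₁
  obtain ⟨p₂, q₂, hp₂, hq₂, e₂⟩ := H₂
  refine ⟨p₁ * p₂ - (X - C a) * (C b - X) * (q₁ * q₂), p₁ * q₂ + q₁ * p₂, ?_, ?_, ?_⟩
  · refine le_trans (degree_sub_le _ _) (max_le ?_ ?_)
    · exact le_trans (degree_mul_le _ _) (by push_cast; exact add_le_add hp₁ hp₂)
    · by_cases hz : q₁ = 0 ∨ q₂ = 0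
      · rcases hz with hz | hz <;> simp [hz]
      push_neg at hz
      obtain ⟨hz₁, hz₂⟩ := hz
      have hd : ((X - C a) * (C b - X) * (q₁ * q₂)).degree = 2 + (q₁.degree + q₂.degree) := by
        rw [degree_mul (p := (X - C a) * (C b - X)) (q := q₁ * q₂),
          degree_mul (p := q₁) (q := q₂), w_deg a b]
      rw [hd, degree_eq_natDegree hz₁, degree_eq_natDegree hz₂]
      have e1 : q₁.natDegree < m := by
        rw [degree_eq_natDegree hz₁] at hq₁; exact_mod_cast hq₁
      have e2 : q₂.natDegree < n := by
        rw [degree_eq_natDegree hz₂] at hq₂; exact_mod_cast hq₂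
      have : (2 : WithBot ℕ) = ((2 : ℕ) : WithBot ℕ) := rfl
      rw [this, ← Nat.cast_add, ← Nat.cast_add]
      exact_mod_cast by omega
  · refine lt_of_le_of_lt (degree_add_le _ _) (max_lt ?_ ?_)
    · by_cases hz : q₂ = 0
      · simp only [hz, mul_zero]
        exact (degree_zero (R := ℝ)) ▸ WithBot.bot_lt_coe _
      by_cases hz₁ : p₁ = 0
      · simp only [hz₁, zero_mul]
        exact (degree_zero (R := ℝ)) ▸ WithBot.bot_lt_coe _
      rw [degree_mul, degree_eq_natDegree hz₁, degree_eq_natDegree hz]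
      rw [degree_eq_natDegree hz₁] at hp₁
      rw [degree_eq_natDegree hz] at hq₂
      have e1 : p₁.natDegree ≤ m := by exact_mod_cast hp₁
      have e2 : q₂.natDegree < n := by exact_mod_cast hq₂
      rw [← Nat.cast_add]
      exact_mod_cast by omega
    · by_cases hz : q₁ = 0
      · simp only [hz, zero_mul]
        exact (degree_zero (R := ℝ)) ▸ WithBot.bot_lt_coe _
      by_cases hz₂ : p₂ = 0
      · simp only [hz₂, mul_zero]
        exact (degree_zero (R := ℝ)) ▸ WithBot.bot_lt_coe _
      rw [degree_mul, degree_eq_natDegree hz, degree_eq_natDegree hz₂]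
      rw [degree_eq_natDegree hz₂] at hp₂
      rw [degree_eq_natDegree hz] at hq₁
      have e1 : p₂.natDegree ≤ n := by exact_mod_cast hp₂
      have e2 : q₁.natDegree < m := by exact_mod_cast hq₁
      rw [← Nat.cast_add]
      exact_mod_cast by omega
  · rw [e₁, e₂]; ring
-- same side
lemma rep_same_side {a b : ℝ} (hab : a < b) (r r₂ : ℝ)
    (hside : (r ≤ a ∧ r₂ ≤ a) ∨ (b ≤ r ∧ b ≤ r₂)) :
    ∃ p q : ℝ[X], p.degree ≤ 1 ∧ q.degree < 1 ∧
      (X - C r) * (X - C r₂) = p ^ 2 + (X - C a) * (C b - X) * q ^ 2 := by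
  have ha : 0 ≤ 1 * a ^ 2 + (-(r + r₂)) * a + r * r₂ := by
    rcases hside with ⟨h1, h2⟩ | ⟨h1, h2⟩ <;> nlinarith
  have hb : 0 ≤ 1 * b ^ 2 + (-(r + r₂)) * b + r * r₂ := by
    rcases hside with ⟨h1, h2⟩ | ⟨h1, h2⟩ <;> nlinarith
  have key : 1 * (b - a) ^ 2 ≤
      (Real.sqrt (1 * a ^ 2 + (-(r + r₂)) * a + r * r₂) +
       Real.sqrt (1 * b ^ 2 + (-(r + r₂)) * b + r * r₂)) ^ 2 := by
    set u := Real.sqrt (1 * a ^ 2 + (-(r + r₂)) * a + r * r₂) with hu_def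
    set v := Real.sqrt (1 * b ^ 2 + (-(r + r₂)) * b + r * r₂) with hv_def
    have hu2 : u ^ 2 = 1 * a ^ 2 + (-(r + r₂)) * a + r * r₂ := Real.sq_sqrt ha
    have hv2 : v ^ 2 = 1 * b ^ 2 + (-(r + r₂)) * b + r * r₂ := Real.sq_sqrt hb
    have hu0 : 0 ≤ u := Real.sqrt_nonneg _
    have hv0 : 0 ≤ v := Real.sqrt_nonneg _
    rcases hside with ⟨h1, h2⟩ | ⟨h1, h2⟩
    · -- v² = (b-r)(b-r₂) ≥ (b-a)²
      nlinarith [mul_nonneg hu0 hv0]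
    · -- u² = (a-r)(a-r₂) = (r-a)(r₂-a) ≥ (b-a)²
      nlinarith [mul_nonneg hu0 hv0]
  obtain ⟨p, q, hp, hq, he⟩ := quad_rep hab 1 (-(r + r₂)) (r * r₂) ha hb key
  refine ⟨p, q, hp, hq, ?_⟩
  rw [← he]
  simp only [map_neg, map_add, map_mul, map_one]
  ring

-- cross
lemma rep_cross {a b : ℝ} (hab : a < b) (r r₂ : ℝ) (h1 : r ≤ a) (h2 : b ≤ r₂) :
    ∃ p q : ℝ[X], p.degree ≤ 1 ∧ q.degree < 1 ∧
      (X - C r) * (C r₂ - X) = p ^ 2 + (X - C a) * (C b - X) * q ^ 2 := by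
  have ha : 0 ≤ (-1) * a ^ 2 + (r + r₂) * a + (-(r * r₂)) := by nlinarith
  have hb : 0 ≤ (-1) * b ^ 2 + (r + r₂) * b + (-(r * r₂)) := by nlinarith
  have key : (-1) * (b - a) ^ 2 ≤
      (Real.sqrt ((-1) * a ^ 2 + (r + r₂) * a + (-(r * r₂))) +
       Real.sqrt ((-1) * b ^ 2 + (r + r₂) * b + (-(r * r₂)))) ^ 2 := by
    have := sq_nonneg (Real.sqrt ((-1) * a ^ 2 + (r + r₂) * a + (-(r * r₂))) +
       Real.sqrt ((-1) * b ^ 2 + (r + r₂) * b + (-(r * r₂))))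
    nlinarith [sq_nonneg (b - a)]
  obtain ⟨p, q, hp, hq, he⟩ := quad_rep hab (-1) (r + r₂) (-(r * r₂)) ha hb key
  refine ⟨p, q, hp, hq, ?_⟩
  rw [← he]
  simp only [map_neg, map_add, map_mul, map_one]
  ring

-- positive definite monic quadratic
lemma rep_posdef {a b : ℝ} (hab : a < b) (c₁ c₀ : ℝ)
    (hpos : ∀ x : ℝ, 0 < x ^ 2 + c₁ * x + c₀) :
    ∃ p q : ℝ[X], p.degree ≤ 1 ∧ q.degree < 1 ∧
      X ^ 2 + C c₁ * X + C c₀ = p ^ 2 + (X - C a) * (C b - X) * q ^ 2 := by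
  have ha : 0 ≤ 1 * a ^ 2 + c₁ * a + c₀ := by nlinarith [hpos a]
  have hb : 0 ≤ 1 * b ^ 2 + c₁ * b + c₀ := by nlinarith [hpos b]
  have key : 1 * (b - a) ^ 2 ≤
      (Real.sqrt (1 * a ^ 2 + c₁ * a + c₀) + Real.sqrt (1 * b ^ 2 + c₁ * b + c₀)) ^ 2 := by
    set u := Real.sqrt (1 * a ^ 2 + c₁ * a + c₀) with hu_def
    set v := Real.sqrt (1 * b ^ 2 + c₁ * b + c₀) with hv_def
    have hu2 : u ^ 2 = 1 * a ^ 2 + c₁ * a + c₀ := Real.sq_sqrt ha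
    have hv2 : v ^ 2 = 1 * b ^ 2 + c₁ * b + c₀ := Real.sq_sqrt hb
    have hu0 : 0 < u := Real.sqrt_pos.mpr (by nlinarith [hpos a])
    have hv0 : 0 < v := Real.sqrt_pos.mpr (by nlinarith [hpos b])
    have hS : 0 < u + v := by linarith
    -- identity : u*v*((u+v)^2-(b-a)^2) = (v*a+u*b)^2 + c₁*(v*a+u*b)*(u+v) + c₀*(u+v)^2
    have key2 : u * v * ((u + v) ^ 2 - (b - a) ^ 2) =
        (v * a + u * b) ^ 2 + c₁ * (v * a + u * b) * (u + v) + c₀ * (u + v) ^ 2 := by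
      linear_combination (u * v - (1 * b ^ 2 + c₁ * b + c₀) + 2 * v ^ 2) * hu2 +
        (u * v + (1 * a ^ 2 + c₁ * a + c₀)) * hv2
    set t := (v * a + u * b) / (u + v) with ht_def
    have hrhs : (v * a + u * b) ^ 2 + c₁ * (v * a + u * b) * (u + v) + c₀ * (u + v) ^ 2 =
        (u + v) ^ 2 * (t ^ 2 + c₁ * t + c₀) := by
      rw [ht_def]; field_simp
    have hpt := hpos t
    have h3 : 0 < u * v * ((u + v) ^ 2 - (b - a) ^ 2) := by
      rw [key2, hrhs]; positivity
    nlinarith [mul_pos hu0 hv0, h3]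
  obtain ⟨p, q, hp, hq, he⟩ := quad_rep hab 1 c₁ c₀ ha hb key
  refine ⟨p, q, hp, hq, ?_⟩
  rw [← he]
  simp only [map_one]
  ring

lemma lukacs {a b : ℝ} (hab : a < b) : ∀ d₀ : ℕ, ∀ h : ℝ[X], h.natDegree = 2 * d₀ →
    (∀ x ∈ Set.Icc a b, 0 ≤ h.eval x) →
    ∃ p q : ℝ[X], p.degree ≤ d₀ ∧ q.degree < d₀ ∧
      h = p ^ 2 + (X - C a) * (C b - X) * q ^ 2 := by
  intro d₀
  induction d₀ using Nat.strong_induction_on with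
  | _ k IH =>
  intro h hdeg hpos
  match k, IH with
  | 0, _ =>
    have hc : h = C (h.coeff 0) := Polynomial.eq_C_of_natDegree_eq_zero (by omega)
    have hc0 : 0 ≤ h.coeff 0 := by
      have := hpos a ⟨le_refl a, hab.le⟩
      rwa [hc, eval_C] at this
    refine ⟨C (Real.sqrt (h.coeff 0)), 0, by simpa using degree_C_le, ?_, ?_⟩
    · rw [degree_zero]; exact WithBot.bot_lt_coe _
    · have : (C (Real.sqrt (h.coeff 0)) : ℝ[X]) ^ 2 = C (h.coeff 0) := by
        rw [← map_pow, Real.sq_sqrt hc0]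
      rw [this, ← hc]; ring
  | (k + 1), IH =>
    have hne : h ≠ 0 := fun h0 => by simp [h0] at hdeg
    have step : ∀ Q g : ℝ[X], h = Q * g → Q ≠ 0 → Q.natDegree = 2 →
        (∀ x ∈ Set.Icc a b, 0 ≤ Q.eval x) →
        (∃ p q : ℝ[X], p.degree ≤ (1:ℕ) ∧ q.degree < (1:ℕ) ∧
          Q = p ^ 2 + (X - C a) * (C b - X) * q ^ 2) →
        ∃ p q : ℝ[X], p.degree ≤ (↑(k+1) : WithBot ℕ) ∧ q.degree < (↑(k+1) : WithBot ℕ) ∧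
          h = p ^ 2 + (X - C a) * (C b - X) * q ^ 2 := by
      intro Q g hh hQne hQdeg hQnn HQ
      have hgne : g ≠ 0 := fun h0 => hne (by rw [hh, h0, mul_zero])
      have hgnn : ∀ x ∈ Set.Icc a b, 0 ≤ g.eval x :=
        div_nonneg_on hab Q g hQne hQnn (fun x hx => by rw [← hh]; exact hpos x hx)
      have hdg : g.natDegree = 2 * k := by
        have := natDegree_mul hQne hgne
        rw [← hh, hdeg, hQdeg] at this
        omega
      have Hg := IH k (by omega) g hdg hgnn
      have Hmul := rep_mul (a := a) (b := b) Hg HQ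
      rw [show g * Q = h by rw [hh]; ring] at Hmul
      exact Hmul
    by_cases hint : ∃ r, a < r ∧ r < b ∧ h.eval r = 0
    · obtain ⟨r, har, hrb, hr⟩ := hint
      obtain ⟨g, hg⟩ := interior_root_sq h hne hpos r har hrb hr
      refine step ((X - C r) ^ 2) g hg (pow_ne_zero _ (X_sub_C_ne_zero r)) ?_ ?_ ?_
      · rw [natDegree_pow, natDegree_X_sub_C]
      · intro x _; simp only [eval_pow, eval_sub, eval_X, eval_C]; positivity
      · exact ⟨X - C r, 0, by rw [degree_X_sub_C]; exact_mod_cast le_refl _,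
          by rw [degree_zero]; exact WithBot.bot_lt_coe _, by ring⟩
    · by_cases hre : ∃ r, h.eval r = 0
      · obtain ⟨r, hr⟩ := hre
        have hside : r ≤ a ∨ b ≤ r := by
          by_contra hc
          push_neg at hc
          exact hint ⟨r, hc.1, hc.2, hr⟩
        obtain ⟨g₁, hg₁⟩ := dvd_iff_isRoot.mpr hr
        have hg₁ne : g₁ ≠ 0 := fun h0 => hne (by rw [hg₁, h0, mul_zero])
        have hdg₁ : g₁.natDegree = 2 * k + 1 := by
          have := natDegree_mul (X_sub_C_ne_zero r) hg₁ne
          rw [← hg₁, hdeg, natDegree_X_sub_C] at this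
          omega
        obtain ⟨r₂, hr₂⟩ := odd_root g₁ ⟨k, by omega⟩
        have hr₂h : h.eval r₂ = 0 := by rw [hg₁, eval_mul, hr₂, mul_zero]
        have hside₂ : r₂ ≤ a ∨ b ≤ r₂ := by
          by_contra hc
          push_neg at hc
          exact hint ⟨r₂, hc.1, hc.2, hr₂h⟩
        obtain ⟨g₂, hg₂⟩ := dvd_iff_isRoot.mpr hr₂
        have hg₂ne : g₂ ≠ 0 := fun h0 => hg₁ne (by rw [hg₂, h0, mul_zero])
        have hQdeg : ∀ s s₂ : ℝ, ((X - C s) * (X - C s₂) : ℝ[X]).natDegree = 2 := by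
          intro s s₂
          rw [natDegree_mul (X_sub_C_ne_zero s) (X_sub_C_ne_zero s₂),
            natDegree_X_sub_C, natDegree_X_sub_C]
        rcases hside with h1 | h1 <;> rcases hside₂ with h2 | h2
        · refine step ((X - C r) * (X - C r₂)) g₂ (by rw [hg₁, hg₂]; ring)
            (mul_ne_zero (X_sub_C_ne_zero r) (X_sub_C_ne_zero r₂)) (hQdeg r r₂) ?_
            (rep_same_side hab r r₂ (Or.inl ⟨h1, h2⟩))
          intro x ⟨hx1, hx2⟩
          simp only [eval_mul, eval_sub, eval_X, eval_C]
          nlinarith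
        · refine step ((X - C r) * (C r₂ - X)) (-g₂) (by rw [hg₁, hg₂]; ring)
            (mul_ne_zero (X_sub_C_ne_zero r)
              (fun h0 => X_sub_C_ne_zero r₂ (by rw [show (X - C r₂ : ℝ[X]) = -(C r₂ - X) by ring, h0, neg_zero])))
            ?_ ?_ (rep_cross hab r r₂ h1 h2)
          · rw [show ((X - C r) * (C r₂ - X) : ℝ[X]) = -((X - C r) * (X - C r₂)) by ring,
              natDegree_neg]
            exact hQdeg r r₂
          · intro x ⟨hx1, hx2⟩
            simp only [eval_mul, eval_sub, eval_X, eval_C]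
            nlinarith
        · refine step ((X - C r₂) * (C r - X)) (-g₂) (by rw [hg₁, hg₂]; ring)
            (mul_ne_zero (X_sub_C_ne_zero r₂)
              (fun h0 => X_sub_C_ne_zero r (by rw [show (X - C r : ℝ[X]) = -(C r - X) by ring, h0, neg_zero])))
            ?_ ?_ (rep_cross hab r₂ r h2 h1)
          · rw [show ((X - C r₂) * (C r - X) : ℝ[X]) = -((X - C r₂) * (X - C r)) by ring,
              natDegree_neg]
            exact hQdeg r₂ r
          · intro x ⟨hx1, hx2⟩
            simp only [eval_mul, eval_sub, eval_X, eval_C]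
            nlinarith
        · refine step ((X - C r) * (X - C r₂)) g₂ (by rw [hg₁, hg₂]; ring)
            (mul_ne_zero (X_sub_C_ne_zero r) (X_sub_C_ne_zero r₂)) (hQdeg r r₂) ?_
            (rep_same_side hab r r₂ (Or.inr ⟨h1, h2⟩))
          intro x ⟨hx1, hx2⟩
          simp only [eval_mul, eval_sub, eval_X, eval_C]
          nlinarith
      · push_neg at hre
        obtain ⟨f, hmon, hirr, hdvd⟩ := h.exists_monic_irreducible_factor
          (not_isUnit_of_natDegree_pos h (by omega))
        obtain ⟨g, hg⟩ := hdvd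
        have hfd2 : f.natDegree ≤ 2 := hirr.natDegree_le_two
        have hfdpos : 0 < f.natDegree := hirr.natDegree_pos
        have hfd1 : f.natDegree ≠ 1 := by
          intro h1
          have hfe := hmon.eq_X_add_C h1
          have : h.eval (-(f.coeff 0)) = 0 := by
            rw [hg, eval_mul, hfe]
            simp
          exact hre _ this
        have hfd : f.natDegree = 2 := by omega
        have hnr : ∀ x, f.eval x ≠ 0 := fun x hx =>
          hre x (by rw [hg, eval_mul, hx, zero_mul])
        have hfp := pos_quad f hmon hfd hnr
        have hc2 : f.coeff 2 = 1 := by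
          have := hmon.coeff_natDegree
          rwa [hfd] at this
        have hfe : f = X ^ 2 + C (f.coeff 1) * X + C (f.coeff 0) := by
          conv_lhs => rw [expand2 f (by omega)]
          rw [hc2, map_one, one_mul]
        have hpos' : ∀ x : ℝ, 0 < x ^ 2 + f.coeff 1 * x + f.coeff 0 := by
          intro x
          have := hfp x
          rw [hfe] at this
          simpa using this
        obtain ⟨p, q, hp, hq, he⟩ := rep_posdef hab (f.coeff 1) (f.coeff 0) hpos'
        refine step f g hg hmon.ne_zero hfd (fun x _ => (hfp x).le) ⟨p, q, hp, hq, ?_⟩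
        rw [hfe, he]

open Polynomial in
theorem stmt_8 (h : Polynomial ℝ) (d₀ : ℕ) (hdeg : h.natDegree = 2 * d₀)
    (a b : ℝ) (hab : a < b) (hpos : ∀ x ∈ Set.Icc a b, 0 ≤ h.eval x) :
    ∃ p q : Polynomial ℝ, p.degree ≤ d₀ ∧ q.degree < d₀ ∧
      h = p ^ 2 + (X - C a) * (C b - X) * q ^ 2 := by
  exact lukacs hab d₀ h hdeg hpos
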